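/- Let R be a finite ring with unity and let K ⊆ J be left ideals of R. Then Σ_{I a left ideal of R with K ⊆ I ⊆ J} μ_R(I,J) equals 1 if K = J, and equals 0 if K ⊊ J. -/

import Mathlib

open scoped BigOperators
open Classical

variable {R : Type*}

/-- The left ideal of `R` generated by `x`, i.e. `(x)_ℓ`. -/
def lgen [Ring R] (x : R) : Submodule R R := Submodule.span R {x}

/-- `[x]_ℓ = {y : (y)_ℓ = (x)_ℓ}`. -/
def classL [Ring R] (x : R) : Set R := {y | lgen y = lgen x}

/-- The character sum `C_χ(x) = ∑_{s ∈ [x]_ℓ} χ(s)`. -/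
noncomputable def CchiL [Ring R] (χ : AddChar R ℂ) (x : R) : ℂ :=
  ∑ᶠ s ∈ classL x, χ s

/-- The set `M_R(J)` of maximal `R`-left ideals of `J`. -/
def maxROf [Ring R] (J : Submodule R R) : Set (Submodule R R) :=
  {M | M < J ∧ ∀ I' : Submodule R R, M < I' → ¬ I' < J}

/-- The set `M_R(J, K)` of maximal `R`-left ideals of `J` containing `K`. -/
def maxROfAbove [Ring R] (J K : Submodule R R) : Set (Submodule R R) :=
  {M | M ∈ maxROf J ∧ K ≤ M}

/-- Intersection of the family `E` of left ideals, with the convention that the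
empty intersection is `J`. -/
noncomputable def interIn [Ring R] (J : Submodule R R) (E : Set (Submodule R R)) :
    Submodule R R :=
  if E = ∅ then J else sInf E

/-- The Möbius function `μ_R(I, J)` on left ideals of `R`. -/
noncomputable def muR [Ring R] (I J : Submodule R R) : ℤ :=
  if I = J then 1
  else if I < J ∧ ∃ E : Set (Submodule R R),
      E ⊆ maxROf J ∧ E.Nonempty ∧ interIn J E = I then
    (Nat.card {E : Set (Submodule R R) //
        E ⊆ maxROf J ∧ interIn J E = I ∧ Even (Nat.card E)} : ℤ)
      - (Nat.card {E : Set (Submodule R R) //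
        E ⊆ maxROf J ∧ interIn J E = I ∧ Odd (Nat.card E)} : ℤ)
  else 0

/-- The function `φ_R(I, J)` on left ideals of `R`. -/
noncomputable def phiR [Ring R] (I J : Submodule R R) : ℂ :=
  if I = J then 1
  else if I < J ∧ ∃ E : Set (Submodule R R),
      E ⊆ maxROf J ∧ E.Nonempty ∧ interIn J E = I then
    ∏ᶠ M ∈ maxROfAbove J I, ((Nat.card J : ℂ) / (Nat.card M : ℂ) - 1)
  else 1


section AuxStmt7

variable [Ring R] [Fintype R]

lemma finiteSubmodule' : Finite (Submodule R R) :=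
  Finite.of_injective (fun M : Submodule R R => (M : Set R)) SetLike.coe_injective

noncomputable instance : Fintype (Submodule R R) :=
  @Fintype.ofFinite _ finiteSubmodule'

noncomputable instance : Fintype (Set (Submodule R R)) := Fintype.ofFinite _

lemma interIn_empty (J : Submodule R R) : interIn J (∅ : Set (Submodule R R)) = J :=
  if_pos rfl

lemma interIn_of_nonempty {J : Submodule R R} {E : Set (Submodule R R)} (hE : E.Nonempty) :
    interIn J E = sInf E :=
  if_neg (Set.nonempty_iff_ne_empty.mp hE)

lemma interIn_lt {J : Submodule R R} {E : Set (Submodule R R)} (hE : E ⊆ maxROf J)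
    (hne : E.Nonempty) : interIn J E < J := by
  obtain ⟨M, hM⟩ := hne
  rw [interIn_of_nonempty ⟨M, hM⟩]
  exact lt_of_le_of_lt (sInf_le hM) (hE hM).1

lemma muR_eq_sum {I J : Submodule R R} (hIJ : I < J) :
    muR I J = ∑ E ∈ Finset.univ.filter
      (fun E : Set (Submodule R R) => E ⊆ maxROf J ∧ interIn J E = I),
      (-1 : ℤ) ^ (Nat.card E) := by
  rw [muR, if_neg hIJ.ne]
  by_cases h : I < J ∧ ∃ E : Set (Submodule R R),
      E ⊆ maxROf J ∧ E.Nonempty ∧ interIn J E = I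
  · rw [if_pos h]
    set P := Finset.univ.filter
      (fun E : Set (Submodule R R) => E ⊆ maxROf J ∧ interIn J E = I) with hP
    rw [← Finset.sum_filter_add_sum_filter_not P (fun E : Set (Submodule R R) => Even (Nat.card E))]
    have he : ∑ E ∈ P.filter (fun E : Set (Submodule R R) => Even (Nat.card E)), (-1 : ℤ) ^ (Nat.card E)
        = (P.filter (fun E : Set (Submodule R R) => Even (Nat.card E))).card := by
      rw [Finset.sum_congr rfl (fun E hE => Even.neg_one_pow (Finset.mem_filter.1 hE).2)]
      simp
    have ho : ∑ E ∈ P.filter (fun E : Set (Submodule R R) => ¬ Even (Nat.card E)), (-1 : ℤ) ^ (Nat.card E)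
        = -((P.filter (fun E : Set (Submodule R R) => ¬ Even (Nat.card E))).card : ℤ) := by
      rw [Finset.sum_congr rfl
        (fun E hE => Odd.neg_one_pow (Nat.not_even_iff_odd.mp (Finset.mem_filter.1 hE).2))]
      simp [Finset.sum_const]
    rw [he, ho]
    have hcarde : Nat.card {E : Set (Submodule R R) //
        E ⊆ maxROf J ∧ interIn J E = I ∧ Even (Nat.card E)}
        = (P.filter (fun E : Set (Submodule R R) => Even (Nat.card E))).card := by
      rw [Nat.card_eq_fintype_card, Fintype.card_subtype, hP, Finset.filter_filter]
      congr 1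
      apply Finset.filter_congr
      intro E _
      simp only [and_assoc]
    have hcardo : Nat.card {E : Set (Submodule R R) //
        E ⊆ maxROf J ∧ interIn J E = I ∧ Odd (Nat.card E)}
        = (P.filter (fun E : Set (Submodule R R) => ¬ Even (Nat.card E))).card := by
      rw [Nat.card_eq_fintype_card, Fintype.card_subtype, hP, Finset.filter_filter]
      congr 1
      apply Finset.filter_congr
      intro E _
      simp only [and_assoc, Nat.not_even_iff_odd]
    rw [hcarde, hcardo]
    ring
  · rw [if_neg h]
    symm
    rw [Finset.sum_eq_zero]
    intro E hE
    rw [Finset.mem_filter] at hE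
    obtain ⟨-, hsub, hint⟩ := hE
    exfalso
    rcases Set.eq_empty_or_nonempty E with rfl | hne
    · rw [interIn_empty] at hint
      exact hIJ.ne hint.symm
    · exact h ⟨hIJ, E, hsub, hne, hint⟩

lemma maxROfAbove_nonempty {K J : Submodule R R} (h : K < J) :
    (maxROfAbove J K).Nonempty := by
  obtain ⟨M, ⟨hKM, hMJ⟩, hmax⟩ := Set.Finite.exists_maximalFor id
    {I : Submodule R R | K ≤ I ∧ I < J} (Set.toFinite _) ⟨K, le_rfl, h⟩
  refine ⟨M, ⟨hMJ, fun I' hMI' hI'J => ?_⟩, hKM⟩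
  exact hMI'.ne (le_antisymm hMI'.le (hmax ⟨le_trans hKM hMI'.le, hI'J⟩ hMI'.le))

end AuxStmt7


theorem stmt7 [Ring R] [Fintype R] (K J : Submodule R R) (hKJ : K ≤ J) :
    (K = J → ∑ᶠ I ∈ {I : Submodule R R | K ≤ I ∧ I ≤ J}, muR I J = 1) ∧
    (K < J → ∑ᶠ I ∈ {I : Submodule R R | K ≤ I ∧ I ≤ J}, muR I J = 0) := by
  classical
  constructor
  · rintro rfl
    have hset : {I : Submodule R R | K ≤ I ∧ I ≤ K} = {K} := by
      ext I
      simp only [Set.mem_setOf_eq, Set.mem_singleton_iff]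
      constructor
      · rintro ⟨h1, h2⟩; exact le_antisymm h2 h1
      · rintro rfl; exact ⟨le_rfl, le_rfl⟩
    rw [hset, finsum_mem_singleton, muR, if_pos rfl]
  · intro hK
    set A : Finset (Submodule R R) := Finset.univ.filter (fun I => K ≤ I ∧ I ≤ J) with hA
    have hSA : {I : Submodule R R | K ≤ I ∧ I ≤ J} = ↑A := by
      ext I; simp [hA]
    rw [hSA, finsum_mem_coe_finset]
    have hJA : J ∈ A := by simp [hA, hKJ]
    rw [← Finset.sum_erase_add A _ hJA]
    have hmu : muR J J = 1 := by rw [muR, if_pos rfl]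
    rw [hmu]
    have hstep : ∀ I ∈ A.erase J, muR I J = ∑ E ∈ Finset.univ.filter
        (fun E : Set (Submodule R R) => E ⊆ maxROf J ∧ interIn J E = I),
        (-1 : ℤ) ^ (Nat.card E) := by
      intro I hI
      rw [Finset.mem_erase] at hI
      obtain ⟨hne, hIA⟩ := hI
      rw [hA, Finset.mem_filter] at hIA
      exact muR_eq_sum (lt_of_le_of_ne hIA.2.2 hne)
    rw [Finset.sum_congr rfl hstep]
    set B : Finset (Set (Submodule R R)) :=
      Finset.univ.filter (fun E => E ⊆ maxROfAbove J K ∧ E.Nonempty) with hB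
    have hmaps : ∀ E ∈ B, interIn J E ∈ A.erase J := by
      intro E hE
      rw [hB, Finset.mem_filter] at hE
      obtain ⟨-, hsub, hne⟩ := hE
      have hsub' : E ⊆ maxROf J := fun M hM => (hsub hM).1
      have hlt : interIn J E < J := interIn_lt hsub' hne
      have hKle : K ≤ interIn J E := by
        rw [interIn_of_nonempty hne]
        exact le_sInf (fun M hM => (hsub hM).2)
      rw [Finset.mem_erase, hA, Finset.mem_filter]
      exact ⟨hlt.ne, Finset.mem_univ _, hKle, hlt.le⟩
    have hfib : ∀ I ∈ A.erase J,
        Finset.univ.filter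
          (fun E : Set (Submodule R R) => E ⊆ maxROf J ∧ interIn J E = I)
        = B.filter (fun E => interIn J E = I) := by
      intro I hI
      rw [Finset.mem_erase] at hI
      obtain ⟨hIne, hIA⟩ := hI
      rw [hA, Finset.mem_filter] at hIA
      obtain ⟨-, hKI, hIJ⟩ := hIA
      ext E
      simp only [Finset.mem_filter, Finset.mem_univ, true_and, hB]
      constructor
      · rintro ⟨hsub, hint⟩
        have hne : E.Nonempty := by
          rcases Set.eq_empty_or_nonempty E with rfl | hne
          · rw [interIn_empty] at hint
            exact absurd hint hIne.symm
          · exact hne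
        refine ⟨⟨fun M hM => ⟨hsub hM, ?_⟩, hne⟩, hint⟩
        calc K ≤ I := hKI
          _ = interIn J E := hint.symm
          _ ≤ M := by rw [interIn_of_nonempty hne]; exact sInf_le hM
      · rintro ⟨⟨hsub, hne⟩, hint⟩
        exact ⟨fun M hM => (hsub hM).1, hint⟩
    rw [Finset.sum_congr rfl (fun I hI => by rw [hfib I hI]),
      Finset.sum_fiberwise_of_maps_to hmaps]
    -- now goal : ∑ E ∈ B, (-1)^(Nat.card E) + 1 = 0
    set T : Finset (Submodule R R) := Finset.univ.filter (· ∈ maxROfAbove J K) with hT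
    have hTne : T.Nonempty := by
      obtain ⟨M, hM⟩ := maxROfAbove_nonempty hK
      exact ⟨M, by simp [hT, hM]⟩
    have hBsum : ∑ E ∈ B, (-1 : ℤ) ^ (Nat.card E)
        = ∑ m ∈ T.powerset.erase ∅, (-1 : ℤ) ^ m.card := by
      refine Finset.sum_nbij' (i := fun E => (Set.toFinite E).toFinset)
        (j := fun m => (↑m : Set (Submodule R R))) ?_ ?_ ?_ ?_ ?_
      · intro E hE
        rw [hB, Finset.mem_filter] at hE
        obtain ⟨-, hsub, hne⟩ := hE
        rw [Finset.mem_erase, Finset.mem_powerset]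
        constructor
        · simp only [ne_eq, Set.Finite.toFinset_eq_empty]
          exact Set.nonempty_iff_ne_empty.mp hne
        · intro M hM
          rw [Set.Finite.mem_toFinset] at hM
          rw [hT, Finset.mem_filter]
          exact ⟨Finset.mem_univ _, hsub hM⟩
      · intro m hm
        rw [Finset.mem_erase, Finset.mem_powerset] at hm
        obtain ⟨hmne, hmsub⟩ := hm
        rw [hB, Finset.mem_filter]
        refine ⟨Finset.mem_univ _, ?_, ?_⟩
        · intro M hM
          have := hmsub hM
          rw [hT, Finset.mem_filter] at this
          exact this.2
        · obtain ⟨x, hx⟩ := Finset.nonempty_iff_ne_empty.mpr hmne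
          exact ⟨x, hx⟩
      · intro E _
        exact Set.Finite.coe_toFinset _
      · intro m _
        ext x
        simp [Set.Finite.mem_toFinset]
        exact Iff.rfl
      · intro E _
        congr 1
        rw [Nat.card_coe_set_eq, Set.ncard_eq_toFinset_card E (Set.toFinite E)]
    rw [hBsum]
    have hps := Finset.sum_erase_add T.powerset (fun m => (-1 : ℤ) ^ m.card)
      (Finset.empty_mem_powerset T)
    rw [Finset.sum_powerset_neg_one_pow_card_of_nonempty hTne] at hps
    simp only [Finset.card_empty, pow_zero] at hps
    linarith
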